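/- Let n ≥ 2 and let φ: [0,1] → [0,∞) be applied entrywise to a probability vector x with x₁ ≥ … ≥ xₙ, where: φ(t) = 0 whenever t = 1; φ is non-increasing; and t ↦ φ(t)/(1−t) is non-decreasing on [0,1). Assume ∑_j φ(x_j) > 0. Then the Yager negation ((1−x_j)/(n−1))_j majorizes the normalized vector (φ(x_j)/∑ᵢφ(xᵢ))_j. In particular, by transitivity with the previous result, x majorizes (φ(x_j)/∑ᵢφ(xᵢ))_j. -/
import Mathlib

/-- Sum of the `k` largest entries of a real vector, as the supremum of sums
over subsets of cardinality `k`. -/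
noncomputable def topSum {n : ℕ} (x : Fin n → ℝ) (k : ℕ) : ℝ :=
  sSup ((fun A : Finset (Fin n) => ∑ i ∈ A, x i) '' {A | A.card = k})

/-- `x` majorizes `y`: partial sums of the decreasing rearrangement of `x`
dominate those of `y`, and the total sums agree. -/
def Majorizes {n : ℕ} (x y : Fin n → ℝ) : Prop :=
  (∀ k : ℕ, topSum y k ≤ topSum x k) ∧ ∑ i, x i = ∑ i, y i

lemma le_topSum {n : ℕ} (x : Fin n → ℝ) (k : ℕ) (A : Finset (Fin n)) (hA : A.card = k) :
    ∑ i ∈ A, x i ≤ topSum x k :=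
  le_csSup (Set.Finite.bddAbove (Set.Finite.image _ (Set.toFinite _))) ⟨A, hA, rfl⟩

lemma topSum_le {n : ℕ} (x : Fin n → ℝ) (k : ℕ) (c : ℝ) (hc : 0 ≤ c)
    (h : ∀ A : Finset (Fin n), A.card = k → ∑ i ∈ A, x i ≤ c) : topSum x k ≤ c := by
  apply Real.sSup_le _ hc
  rintro r ⟨A, hA, rfl⟩; exact h A hA

lemma topSum_of_gt {n k : ℕ} (x : Fin n → ℝ) (h : n < k) : topSum x k = 0 := by
  unfold topSum
  have : {A : Finset (Fin n) | A.card = k} = ∅ := by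
    ext A
    simp only [Set.mem_setOf_eq, Set.mem_empty_iff_false, iff_false]
    intro hA
    have := A.card_le_univ
    simp [hA, Fintype.card_fin] at this
    omega
  rw [this, Set.image_empty, Real.sSup_empty]

lemma card_filter_le (n m : ℕ) :
    (Finset.univ.filter fun j : Fin n => m ≤ (j : ℕ)).card = n - m := by
  rcases lt_or_ge m n with h | h
  · have : (Finset.univ.filter fun j : Fin n => m ≤ (j : ℕ)) = Finset.Ici ⟨m, h⟩ := by
      ext j; simp [Fin.le_def]
    rw [this, Fin.card_Ici]
  · have : (Finset.univ.filter fun j : Fin n => m ≤ (j : ℕ)) = ∅ := by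
      ext j; simp; omega
    rw [this]; simp; omega

lemma card_filter_lt (n k : ℕ) (hk : k ≤ n) :
    (Finset.univ.filter fun j : Fin n => (j : ℕ) < k).card = k := by
  have h1 := card_filter_le n k
  have h2 := Finset.card_filter_add_card_filter_not (s := (Finset.univ : Finset (Fin n)))
    (p := fun j : Fin n => k ≤ (j : ℕ))
  simp only [Finset.card_univ, Fintype.card_fin, not_le] at h2
  omega

/-- central lemma, monotone version -/
lemma key_mono {n k : ℕ} (hk1 : 1 ≤ k) (hkn : k ≤ n) (v c : Fin n → ℝ)
    (hv : Monotone v) (hc0 : ∀ j, 0 ≤ c j) (hc1 : ∀ j, c j ≤ 1)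
    (hcs : ∑ j, c j = k) :
    ∑ j, c j * v j ≤ ∑ j ∈ Finset.univ.filter (fun j : Fin n => n - k ≤ (j : ℕ)), v j := by
  have hp : n - k < n := by omega
  set p : Fin n := ⟨n - k, hp⟩ with hpdef
  have hTsum : ∑ j ∈ Finset.univ.filter (fun j : Fin n => n - k ≤ (j : ℕ)), v j
      = ∑ j : Fin n, (if n - k ≤ (j : ℕ) then (1:ℝ) else 0) * v j := by
    rw [Finset.sum_filter]
    exact Finset.sum_congr rfl fun j _ => by split <;> simp
  rw [hTsum]
  have h1 : ∀ j : Fin n, (c j - if n - k ≤ (j : ℕ) then (1:ℝ) else 0) * v j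
      ≤ (c j - if n - k ≤ (j : ℕ) then (1:ℝ) else 0) * v p := by
    intro j
    by_cases hj : n - k ≤ (j : ℕ)
    · rw [if_pos hj]
      have hvp : v p ≤ v j := hv (by simp [Fin.le_def, hpdef, hj])
      have : c j - 1 ≤ 0 := by linarith [hc1 j]
      exact mul_le_mul_of_nonpos_left hvp this
    · rw [if_neg hj]
      have hvp : v j ≤ v p := hv (by simp [Fin.le_def, hpdef]; omega)
      simpa using mul_le_mul_of_nonneg_left hvp (by simpa using hc0 j)
  have h2 : ∑ j, (c j - if n - k ≤ (j : ℕ) then (1:ℝ) else 0) * v j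
      ≤ ∑ j, (c j - if n - k ≤ (j : ℕ) then (1:ℝ) else 0) * v p :=
    Finset.sum_le_sum fun j _ => h1 j
  have h3 : ∑ j : Fin n, (if n - k ≤ (j : ℕ) then (1:ℝ) else 0) = k := by
    rw [Finset.sum_boole]
    have := card_filter_le n (n - k)
    rw [this]
    congr 1; omega
  have h4 : ∑ j, (c j - if n - k ≤ (j : ℕ) then (1:ℝ) else 0) * v p = 0 := by
    rw [← Finset.sum_mul, Finset.sum_sub_distrib, hcs, h3, sub_self, zero_mul]
  have h5 : ∑ j, (c j - if n - k ≤ (j : ℕ) then (1:ℝ) else 0) * v j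
      = ∑ j, c j * v j - ∑ j : Fin n, (if n - k ≤ (j : ℕ) then (1:ℝ) else 0) * v j := by
    rw [← Finset.sum_sub_distrib]
    exact Finset.sum_congr rfl fun j _ => by ring
  linarith [h2, h4 ▸ h2, h5 ▸ h2]

/-- central lemma, antitone version -/
lemma key_anti {n k : ℕ} (hk1 : 1 ≤ k) (hkn : k ≤ n) (v c : Fin n → ℝ)
    (hv : Antitone v) (hc0 : ∀ j, 0 ≤ c j) (hc1 : ∀ j, c j ≤ 1)
    (hcs : ∑ j, c j = k) :
    ∑ j, c j * v j ≤ ∑ j ∈ Finset.univ.filter (fun j : Fin n => (j : ℕ) < k), v j := by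
  have hp : k - 1 < n := by omega
  set p : Fin n := ⟨k - 1, hp⟩ with hpdef
  have hTsum : ∑ j ∈ Finset.univ.filter (fun j : Fin n => (j : ℕ) < k), v j
      = ∑ j : Fin n, (if (j : ℕ) < k then (1:ℝ) else 0) * v j := by
    rw [Finset.sum_filter]
    exact Finset.sum_congr rfl fun j _ => by split <;> simp
  rw [hTsum]
  have h1 : ∀ j : Fin n, (c j - if (j : ℕ) < k then (1:ℝ) else 0) * v j
      ≤ (c j - if (j : ℕ) < k then (1:ℝ) else 0) * v p := by
    intro j
    by_cases hj : (j : ℕ) < k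
    · rw [if_pos hj]
      have hvp : v p ≤ v j := hv (by simp [Fin.le_def, hpdef]; omega)
      have : c j - 1 ≤ 0 := by linarith [hc1 j]
      exact mul_le_mul_of_nonpos_left hvp this
    · rw [if_neg hj]
      have hvp : v j ≤ v p := hv (by simp [Fin.le_def, hpdef]; omega)
      simpa using mul_le_mul_of_nonneg_left hvp (by simpa using hc0 j)
  have h2 : ∑ j, (c j - if (j : ℕ) < k then (1:ℝ) else 0) * v j
      ≤ ∑ j, (c j - if (j : ℕ) < k then (1:ℝ) else 0) * v p :=
    Finset.sum_le_sum fun j _ => h1 j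
  have h3 : ∑ j : Fin n, (if (j : ℕ) < k then (1:ℝ) else 0) = k := by
    rw [Finset.sum_boole, card_filter_lt n k hkn]
  have h4 : ∑ j, (c j - if (j : ℕ) < k then (1:ℝ) else 0) * v p = 0 := by
    rw [← Finset.sum_mul, Finset.sum_sub_distrib, hcs, h3, sub_self, zero_mul]
  have h5 : ∑ j, (c j - if (j : ℕ) < k then (1:ℝ) else 0) * v j
      = ∑ j, c j * v j - ∑ j : Fin n, (if (j : ℕ) < k then (1:ℝ) else 0) * v j := by
    rw [← Finset.sum_sub_distrib]
    exact Finset.sum_congr rfl fun j _ => by ring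
  linarith [h2, h4 ▸ h2, h5 ▸ h2]

theorem stmt_16 (n : ℕ) (hn : 2 ≤ n) (x : Fin n → ℝ)
    (hpos : ∀ i, 0 ≤ x i) (hsum : ∑ i, x i = 1) (hsort : Antitone x)
    (φ : ℝ → ℝ)
    (hφpos : ∀ t, 0 ≤ t → t ≤ 1 → 0 ≤ φ t)
    (hφone : φ 1 = 0)
    (hφmono : ∀ s t, 0 ≤ s → s ≤ t → t ≤ 1 → φ t ≤ φ s)
    (hφquot : ∀ s t, 0 ≤ s → s ≤ t → t < 1 → φ s / (1 - s) ≤ φ t / (1 - t))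
    (hZ : 0 < ∑ j, φ (x j)) :
    Majorizes (fun j => (1 - x j) / ((n : ℝ) - 1))
      (fun j => φ (x j) / ∑ i, φ (x i)) ∧
    Majorizes x (fun j => φ (x j) / ∑ i, φ (x i)) := by
  have hn0 : (0:ℝ) < (n:ℝ) - 1 := by
    have : (2:ℝ) ≤ (n:ℝ) := by exact_mod_cast hn
    linarith
  set Z := ∑ j, φ (x j) with hZdef
  set y : Fin n → ℝ := fun j => φ (x j) / Z with hydef
  set w : Fin n → ℝ := fun j => (1 - x j) / ((n : ℝ) - 1) with hwdef
  have hx1 : ∀ i, x i ≤ 1 := by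
    intro i
    calc x i ≤ ∑ j, x j := Finset.single_le_sum (fun j _ => hpos j) (Finset.mem_univ i)
    _ = 1 := hsum
  have hφx : ∀ j, 0 ≤ φ (x j) := fun j => hφpos _ (hpos j) (hx1 j)
  have cross : ∀ a b : Fin n, x a ≤ x b → φ (x a) * (1 - x b) ≤ φ (x b) * (1 - x a) := by
    intro a b hab
    rcases eq_or_lt_of_le (hx1 b) with h1 | h1
    · simp [h1, hφone]
    · have h2 := hφquot (x a) (x b) (hpos a) hab h1
      have ha1 : x a < 1 := lt_of_le_of_lt hab h1
      rw [div_le_div_iff₀ (by linarith) (by linarith)] at h2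
      linarith
  have hy_mono : Monotone y := by
    intro a b hab
    have h1 : x b ≤ x a := hsort hab
    have h2 : φ (x a) ≤ φ (x b) := hφmono (x b) (x a) (hpos b) h1 (hx1 a)
    simp only [hydef]
    gcongr
  have hw_mono : Monotone w := by
    intro a b hab
    have h1 : x b ≤ x a := hsort hab
    simp only [hwdef]
    gcongr
  have hsub : ∑ j : Fin n, (1 - x j) = (n:ℝ) - 1 := by
    rw [Finset.sum_sub_distrib, hsum]
    simp
  have sumw : ∑ j, w j = 1 := by
    simp only [hwdef]
    rw [← Finset.sum_div, hsub, div_self (ne_of_gt hn0)]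
  have sumy : ∑ j, y j = 1 := by
    simp only [hydef]
    rw [← Finset.sum_div, ← hZdef, div_self (ne_of_gt hZ)]
  have hw0 : ∀ j, 0 ≤ w j := by
    intro j
    apply div_nonneg _ (le_of_lt hn0)
    linarith [hx1 j]
  have hy0 : ∀ j, 0 ≤ y j := fun j => div_nonneg (hφx j) (le_of_lt hZ)
  -- key inequality on the top-k block
  have ineq1 : ∀ k : ℕ, 1 ≤ k → k ≤ n →
      ∑ j ∈ Finset.univ.filter (fun j : Fin n => n - k ≤ (j : ℕ)), y j
      ≤ ∑ j ∈ Finset.univ.filter (fun j : Fin n => n - k ≤ (j : ℕ)), w j := by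
    intro k hk1 hkn
    set T := Finset.univ.filter (fun j : Fin n => n - k ≤ (j : ℕ)) with hTdef
    set Tc := Finset.univ.filter (fun j : Fin n => ¬ (n - k ≤ (j : ℕ))) with hTcdef
    have hZsplit : (∑ j ∈ T, φ (x j)) + (∑ j ∈ Tc, φ (x j)) = Z :=
      Finset.sum_filter_add_sum_filter_not _ _ _
    have hUsplit : (∑ j ∈ T, (1 - x j)) + (∑ j ∈ Tc, (1 - x j)) = (n:ℝ) - 1 := by
      rw [Finset.sum_filter_add_sum_filter_not, hsub]
    have hmain : (∑ j ∈ T, φ (x j)) * (∑ i ∈ Tc, (1 - x i))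
        ≤ (∑ i ∈ Tc, φ (x i)) * (∑ j ∈ T, (1 - x j)) := by
      rw [Finset.sum_mul_sum, Finset.sum_mul_sum, Finset.sum_comm]
      apply Finset.sum_le_sum
      intro i hi
      apply Finset.sum_le_sum
      intro j hj
      simp only [hTdef, Finset.mem_filter, Finset.mem_univ, true_and] at hj
      simp only [hTcdef, Finset.mem_filter, Finset.mem_univ, true_and, not_le] at hi
      have hij : i ≤ j := by
        rw [Fin.le_def]; omega
      exact cross j i (hsort hij)
    have hT1 : ∑ j ∈ T, y j = (∑ j ∈ T, φ (x j)) / Z := by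
      simp only [hydef]; rw [Finset.sum_div]
    have hT2 : ∑ j ∈ T, w j = (∑ j ∈ T, (1 - x j)) / ((n:ℝ) - 1) := by
      simp only [hwdef]; rw [Finset.sum_div]
    rw [hT1, hT2, div_le_div_iff₀ hZ hn0]
    have h1 : 0 ≤ ∑ j ∈ T, φ (x j) := Finset.sum_nonneg fun j _ => hφx j
    have h2 : 0 ≤ ∑ j ∈ T, (1 - x j) := Finset.sum_nonneg fun j _ => by linarith [hx1 j]
    nlinarith [hmain, hZsplit, hUsplit]
  -- majorization 1 : w majorizes y
  have major1 : ∀ k : ℕ, topSum y k ≤ topSum w k := by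
    intro k
    rcases lt_or_ge n k with hnk | hkn
    · rw [topSum_of_gt _ hnk, topSum_of_gt _ hnk]
    rcases Nat.eq_zero_or_pos k with rfl | hk1
    · have h0 : (0:ℝ) ≤ topSum w 0 := by
        have := le_topSum w 0 ∅ rfl
        simpa using this
      apply topSum_le _ _ _ h0
      intro A hA
      rw [Finset.card_eq_zero] at hA
      simp [hA, h0]
    set T := Finset.univ.filter (fun j : Fin n => n - k ≤ (j : ℕ)) with hTdef
    have hcardT : T.card = k := by
      have := card_filter_le n (n - k)
      rw [hTdef, this]
      omega
    have hwT : 0 ≤ ∑ j ∈ T, w j := Finset.sum_nonneg fun j _ => hw0 j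
    have htop : ∑ j ∈ T, w j ≤ topSum w k := le_topSum w k T hcardT
    apply topSum_le _ _ _ (le_trans hwT htop)
    intro A hA
    have hAy : ∑ i ∈ A, y i = ∑ j, (fun j => if j ∈ A then (1:ℝ) else 0) j * y j := by
      simp only [ite_mul, one_mul, zero_mul]
      rw [Finset.sum_ite_mem, Finset.univ_inter]
    rw [hAy]
    calc ∑ j, (fun j => if j ∈ A then (1:ℝ) else 0) j * y j
        ≤ ∑ j ∈ T, y j := by
          apply key_mono hk1 hkn y _ hy_mono
          · intro j; by_cases hj : j ∈ A <;> simp [hj]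
          · intro j; by_cases hj : j ∈ A <;> simp [hj]
          · rw [Finset.sum_boole]
            simp [Finset.filter_mem_eq_inter, hA]
      _ ≤ ∑ j ∈ T, w j := ineq1 k hk1 hkn
      _ ≤ topSum w k := htop
  -- majorization 2 : x majorizes w
  have major2 : ∀ k : ℕ, topSum w k ≤ topSum x k := by
    intro k
    rcases lt_or_ge n k with hnk | hkn
    · rw [topSum_of_gt _ hnk, topSum_of_gt _ hnk]
    rcases Nat.eq_zero_or_pos k with rfl | hk1
    · have h0 : (0:ℝ) ≤ topSum x 0 := by
        have := le_topSum x 0 ∅ rfl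
        simpa using this
      apply topSum_le _ _ _ h0
      intro A hA
      rw [Finset.card_eq_zero] at hA
      simp [hA, h0]
    set T := Finset.univ.filter (fun j : Fin n => (j : ℕ) < k) with hTdef
    have hcardT : T.card = k := card_filter_lt n k hkn
    have hxT : 0 ≤ ∑ j ∈ T, x j := Finset.sum_nonneg fun j _ => hpos j
    have htop : ∑ j ∈ T, x j ≤ topSum x k := le_topSum x k T hcardT
    apply topSum_le _ _ _ (le_trans hxT htop)
    intro A hA
    set c : Fin n → ℝ := fun j => ((k:ℝ) - if j ∈ A then 1 else 0) / ((n:ℝ) - 1) with hcdef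
    have hAw : ∑ i ∈ A, w i = ∑ j, c j * x j := by
      have e1 : ∀ j : Fin n, c j * x j
          = ((k:ℝ) * x j - (if j ∈ A then x j else 0)) / ((n:ℝ) - 1) := by
        intro j
        by_cases hj : j ∈ A <;> simp [hcdef, hj] <;> ring
      have lhs : ∑ i ∈ A, w i = ((k:ℝ) - ∑ i ∈ A, x i) / ((n:ℝ) - 1) := by
        simp only [hwdef]
        rw [← Finset.sum_div, Finset.sum_sub_distrib, Finset.sum_const, hA]
        simp
      have rhs : ∑ j, c j * x j = ((k:ℝ) - ∑ i ∈ A, x i) / ((n:ℝ) - 1) := by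
        rw [Finset.sum_congr rfl fun j _ => e1 j, ← Finset.sum_div, Finset.sum_sub_distrib,
          ← Finset.mul_sum, hsum, mul_one]
        congr 1
        rw [Finset.sum_ite_mem, Finset.univ_inter]
      rw [lhs, rhs]
    rw [hAw]
    calc ∑ j, c j * x j
        ≤ ∑ j ∈ T, x j := by
          apply key_anti hk1 hkn x c hsort
          · intro j
            apply div_nonneg _ (le_of_lt hn0)
            by_cases hj : j ∈ A
            · simp only [hj, if_pos]
              have : (1:ℝ) ≤ (k:ℝ) := by exact_mod_cast hk1
              linarith
            · simp [hj]
          · intro j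
            rw [div_le_one hn0]
            by_cases hj : j ∈ A
            · have : (k:ℝ) ≤ (n:ℝ) := by exact_mod_cast hkn
              simp [hj]; linarith
            · have hAu : A.card < n := by
                have hss : A ⊂ Finset.univ := by
                  rw [Finset.ssubset_univ_iff]
                  intro h
                  exact hj (h ▸ Finset.mem_univ j)
                have := Finset.card_lt_card hss
                simpa using this
              have : (k:ℝ) ≤ (n:ℝ) - 1 := by
                have hkn1 : (k:ℕ) + 1 ≤ n := by omega
                have h2 : ((k:ℕ):ℝ) + 1 ≤ ((n:ℕ):ℝ) := by exact_mod_cast hkn1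
                linarith
              simp [hj]; linarith
          · rw [← Finset.sum_div, Finset.sum_sub_distrib, Finset.sum_const, Finset.sum_boole]
            simp only [Finset.filter_mem_eq_inter, Finset.univ_inter, hA, Finset.card_univ,
              Fintype.card_fin, nsmul_eq_mul, mul_one]
            rw [div_eq_iff (ne_of_gt hn0)]
            ring
      _ ≤ topSum x k := htop
  refine ⟨⟨major1, sumw.trans sumy.symm⟩, fun k => le_trans (major1 k) (major2 k), hsum.trans sumy.symm⟩
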